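/- The function ψ ↦ log J(ψ) is strongly convex with parameter A_1 = (1−ν)/ω²; that is, its Hessian satisfies ∇² log J(ψ) ⪰ A_1 I_n for all ψ ∈ R^n. -/

import Mathlib

open Real Finset

lemma oneD {M : ℕ} [NeZero M] (p α β : Fin M → ℝ) (hp : ∀ j, 0 < p j) (γ : ℝ) :
    2*γ ≤ deriv (deriv (fun t : ℝ =>
      Real.log (∑ j, p j * Real.exp (α j + β j * t + γ * t^2)))) 0 := by
  set w : ℝ → Fin M → ℝ := fun t j => p j * Real.exp (α j + β j * t + γ * t^2) with hw
  set D : ℝ → ℝ := fun t => ∑ j, w t j with hD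
  set N : ℝ → ℝ := fun t => ∑ j, w t j * (β j + 2*γ*t) with hN
  have hwpos : ∀ t j, 0 < w t j := fun t j => mul_pos (hp j) (Real.exp_pos _)
  have hDpos : ∀ t, 0 < D t := fun t => Finset.sum_pos (fun j _ => hwpos t j) univ_nonempty
  have hq : ∀ (j : Fin M) (t : ℝ), HasDerivAt (fun t : ℝ => α j + β j * t + γ * t^2)
      (β j + 2*γ*t) t := by
    intro j t
    have h := ((hasDerivAt_const t (α j)).add
      ((hasDerivAt_id t).const_mul (β j))).add ((hasDerivAt_pow 2 t).const_mul γ)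
    refine h.congr_deriv ?_
    simp; ring
  have hwD : ∀ (j : Fin M) (t : ℝ), HasDerivAt (fun t => w t j) (w t j * (β j + 2*γ*t)) t := by
    intro j t
    have h := ((hq j t).exp).const_mul (p j)
    refine h.congr_deriv ?_
    simp [hw]; ring
  have hDderiv : ∀ t, HasDerivAt D (N t) t := by
    intro t
    exact HasDerivAt.fun_sum (fun j _ => hwD j t)
  have hφ : deriv (fun t : ℝ => Real.log (∑ j, p j * Real.exp (α j + β j * t + γ * t^2)))
      = fun t => N t / D t := by
    funext t
    exact ((hDderiv t).log (hDpos t).ne').deriv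
  rw [hφ]
  -- derivative of N at 0
  have hNderiv : HasDerivAt N (∑ j, (w 0 j * β j * β j + w 0 j * (2*γ))) 0 := by
    apply HasDerivAt.fun_sum
    intro j _
    have h := (hwD j 0).mul ((hasDerivAt_const (0:ℝ) (β j)).add
      ((hasDerivAt_id (0:ℝ)).const_mul (2*γ)))
    refine h.congr_deriv ?_
    simp; try ring
  set N0 : ℝ := N 0 with hN0
  set D0 : ℝ := D 0 with hD0
  set N'0 : ℝ := ∑ j, (w 0 j * β j * β j + w 0 j * (2*γ)) with hN'0
  have hdd : HasDerivAt (fun t => N t / D t) ((N'0 * D0 - N0 * N0) / D0^2) 0 :=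
    hNderiv.div (hDderiv 0) (hDpos 0).ne'
  rw [hdd.deriv]
  rw [le_div_iff₀ (pow_pos (hDpos 0) 2)]
  have hCS : (∑ j, w 0 j * β j)^2 ≤ (∑ j, w 0 j * β j * β j) * D0 := by
    have h := Finset.sum_mul_sq_le_sq_mul_sq univ (fun j => Real.sqrt (w 0 j))
      (fun j => Real.sqrt (w 0 j) * β j)
    have e1 : ∀ j : Fin M, Real.sqrt (w 0 j) * (Real.sqrt (w 0 j) * β j) = w 0 j * β j := by
      intro j
      rw [← mul_assoc, Real.mul_self_sqrt (hwpos 0 j).le]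
    have e2 : ∀ j : Fin M, Real.sqrt (w 0 j) ^ 2 = w 0 j := fun j =>
      Real.sq_sqrt (hwpos 0 j).le
    have e3 : ∀ j : Fin M, (Real.sqrt (w 0 j) * β j)^2 = w 0 j * β j * β j := by
      intro j
      rw [mul_pow, e2]; try ring
    calc (∑ j, w 0 j * β j)^2 = (∑ j, Real.sqrt (w 0 j) * (Real.sqrt (w 0 j) * β j))^2 := by
          simp_rw [e1]
      _ ≤ (∑ j, Real.sqrt (w 0 j) ^ 2) * ∑ j, (Real.sqrt (w 0 j) * β j)^2 := h
      _ = (∑ j, w 0 j * β j * β j) * D0 := by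
          simp_rw [e2, e3]; exact mul_comm _ _
  have hN0eq : N0 = ∑ j, w 0 j * β j := by
    simp [hN0, hN]
  have hD0s : D0 = ∑ j, w 0 j := rfl
  have hsplit : N'0 = (∑ j, w 0 j * β j * β j) + 2*γ*D0 := by
    rw [hN'0, Finset.sum_add_distrib, ← Finset.sum_mul, hD0s]
    ring
  rw [hsplit, hN0eq, ← pow_two]
  nlinarith [hCS, hDpos 0]

lemma bridge {E : Type*} [NormedAddCommGroup E] [NormedSpace ℝ E] {g : E → ℝ}
    (hg : ContDiff ℝ 2 g) (x v : E) :
    iteratedFDeriv ℝ 2 g x ![v, v] = deriv (deriv (fun t : ℝ => g (x + t • v))) 0 := by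
  have hline : ∀ t : ℝ, HasDerivAt (fun t : ℝ => x + t • v) v t := by
    intro t
    simpa using ((hasDerivAt_id t).smul_const v).const_add x
  have hgd : Differentiable ℝ g := hg.differentiable (by norm_num)
  have h1 : ∀ t : ℝ, HasDerivAt (fun t : ℝ => g (x + t • v)) (fderiv ℝ g (x + t • v) v) t :=
    fun t => (hgd (x + t • v)).hasFDerivAt.comp_hasDerivAt t (hline t)
  have hder1 : deriv (fun t : ℝ => g (x + t • v)) = fun t => fderiv ℝ g (x + t • v) v := by
    funext t; exact (h1 t).deriv
  have hf' : ContDiff ℝ 1 (fderiv ℝ g) := hg.fderiv_right (le_refl 2)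
  have hf'd : Differentiable ℝ (fderiv ℝ g) := hf'.differentiable one_ne_zero
  have h2 : HasDerivAt (fun t : ℝ => fderiv ℝ g (x + t • v)) (fderiv ℝ (fderiv ℝ g) x v) 0 := by
    have := (hf'd x).hasFDerivAt.comp_hasDerivAt_of_eq 0 (hline 0) (by simp)
    exact this
  have h3 : HasDerivAt (fun t : ℝ => fderiv ℝ g (x + t • v) v)
      (fderiv ℝ (fderiv ℝ g) x v v) 0 := by
    have := h2.clm_apply (hasDerivAt_const (0:ℝ) v)
    simpa using this
  rw [hder1, h3.deriv, iteratedFDeriv_two_apply]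
  simp


theorem logJ_strongly_convex (n M : ℕ) (Y : EuclideanSpace ℝ (Fin n))
    (f : Fin M → EuclideanSpace ℝ (Fin n)) (pi : Fin M → ℝ)
    (hpi : ∀ j, 0 < pi j) (hpi1 : ∑ j, pi j = 1)
    (ν ω : ℝ) (hν : ν ∈ Set.Ioo (0:ℝ) 1) (hω : 0 < ω)
    (J : EuclideanSpace ℝ (Fin n) → ℝ)
    (hJ : ∀ ψ, J ψ = ∑ j, pi j *
      Real.exp (-‖f j - Y‖^2 / (2*ω^2) + (1-ν) * ‖ψ - f j‖^2 / (2*ω^2))) :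
    ∀ ψ v, ((1-ν)/ω^2) * ‖v‖^2 ≤
      iteratedFDeriv ℝ 2 (fun ψ => Real.log (J ψ)) ψ ![v, v] := by
  have hM : M ≠ 0 := by
    rintro rfl
    simp at hpi1
  haveI : NeZero M := ⟨hM⟩
  -- smoothness of J
  have hJfun : J = fun ψ => ∑ j, pi j *
      Real.exp (-‖f j - Y‖^2 / (2*ω^2) + (1-ν) * ‖ψ - f j‖^2 / (2*ω^2)) := funext hJ
  have hJc : ContDiff ℝ 2 J := by
    rw [hJfun]
    apply ContDiff.sum
    intro j _
    apply ContDiff.mul contDiff_const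
    apply ContDiff.exp
    apply ContDiff.add contDiff_const
    apply ContDiff.div_const
    exact contDiff_const.mul ((contDiff_id.sub contDiff_const).norm_sq ℝ)
  have hJpos : ∀ ψ, 0 < J ψ := by
    intro ψ
    rw [hJ]
    exact Finset.sum_pos (fun j _ => mul_pos (hpi j) (Real.exp_pos _)) Finset.univ_nonempty
  have hg : ContDiff ℝ 2 (fun ψ => Real.log (J ψ)) := hJc.log (fun ψ => (hJpos ψ).ne')
  intro ψ v
  rw [bridge hg ψ v]
  set α : Fin M → ℝ := fun j => -‖f j - Y‖^2 / (2*ω^2) + (1-ν) * ‖ψ - f j‖^2 / (2*ω^2) with hα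
  set β : Fin M → ℝ := fun j => (1-ν) * (inner ℝ (ψ - f j) v : ℝ) / ω^2 with hβ
  set γ : ℝ := (1-ν) * ‖v‖^2 / (2*ω^2) with hγ
  have key : (fun t : ℝ => Real.log (J (ψ + t • v)))
      = fun t => Real.log (∑ j, pi j * Real.exp (α j + β j * t + γ * t^2)) := by
    funext t
    rw [hJ]
    congr 1
    apply Finset.sum_congr rfl
    intro j _
    congr 2
    have hv : ψ + t • v - f j = (ψ - f j) + t • v := by abel
    rw [hv, norm_add_sq_real, real_inner_smul_right, norm_smul]
    simp only [hα, hβ, hγ, norm_smul, Real.norm_eq_abs, mul_pow, sq_abs]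
    ring
  rw [key]
  have h2γ := oneD pi α β hpi γ
  have heq : ((1-ν)/ω^2) * ‖v‖^2 = 2*γ := by rw [hγ]; ring
  linarith
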